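/- Let (F_p)_{p ∈ D(ℤ̄ⁿ)} be a distributive D(ℤ̄ⁿ)-filtration of an ungraded chain complex (C,d). Let z ⊆ q ⊆ p ⊆ b be downsets of ℤ̄ⁿ, let Z := Z(z,q,p,b) and B := B(z,q,p,b), and define z̃ := p∖Z and b̃ := q∪B. Then z̃ and b̃ are downsets with z ⊆ z̃ ⊆ q and p ⊆ b̃ ⊆ b, and the four maps S^{p,z}_{b̃,q} → S^{p,z̃}_{b̃,q} and S^{p,z}_{b,q} → S^{p,z̃}_{b,q} (identity on representatives, enlarging the cycle subgroup from F_p ∩ d⁻¹(F_z) to F_p ∩ d⁻¹(F_{z̃})) as well as S^{p,z}_{b̃,q} → S^{p,z}_{b,q} and S^{p,z̃}_{b̃,q} → S^{p,z̃}_{b,q} (identity on representatives, enlarging the denominator from d(F_{b̃}) + F_q to d(F_b) + F_q) are all isomorphisms, forming a commutative square. -/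

import Mathlib

open Function

/-- The numerator subgroup `F_p ∩ d⁻¹(F_z)` of an S-term. -/
abbrev Snum {C : Type*} [AddCommGroup C] (d : C →+ C) (Fp Fz : AddSubgroup C) :
    AddSubgroup C := Fp ⊓ Fz.comap d

/-- The denominator subgroup `d(F_b) + F_q` of an S-term. -/
abbrev Sden {C : Type*} [AddCommGroup C] (d : C →+ C) (Fb Fq : AddSubgroup C) :
    AddSubgroup C := Fb.map d ⊔ Fq

/-- The S-term `S^{pz}_{bq} = (F_p ∩ d⁻¹(F_z)) / ((F_p ∩ d⁻¹(F_z)) ∩ (d(F_b) + F_q))`. -/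
abbrev Sterm {C : Type*} [AddCommGroup C] (d : C →+ C) (Fp Fz Fb Fq : AddSubgroup C) :=
  ↥(Snum d Fp Fz) ⧸ (Sden d Fb Fq).addSubgroupOf (Snum d Fp Fz)

/-- The class of an element `x ∈ F_p ∩ d⁻¹(F_z)` in the S-term. -/
def Scls {C : Type*} [AddCommGroup C] (d : C →+ C) (Fp Fz Fb Fq : AddSubgroup C)
    {x : C} (hx : x ∈ Snum d Fp Fz) : Sterm d Fp Fz Fb Fq :=
  QuotientAddGroup.mk ⟨x, hx⟩

/-- `ℤ̄ = ℤ ∪ {−∞, +∞}`. -/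
abbrev ZBar := WithBot (WithTop ℤ)

/-- A single step of a path inside `A`: both endpoints are in `A` and they are
comparable. -/
def StepIn {V : Type*} [Preorder V] (A : Set V) (a b : V) : Prop :=
  a ∈ A ∧ b ∈ A ∧ (a ≤ b ∨ b ≤ a)

/-- `x` and `y` are joined by a path inside `A` whose consecutive points are comparable. -/
def ReachIn {V : Type*} [Preorder V] (A : Set V) : V → V → Prop :=
  Relation.ReflTransGen (StepIn A)

/-- `Z(z,q,p,b)`: the union of the connected components of `p∖z` that intersect `p∖q`. -/
def Zset {V : Type*} [Preorder V] (z q p b : Set V) : Set V :=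
  {x | x ∈ p \ z ∧ ∃ y ∈ p \ q, ReachIn (p \ z) x y}

/-- `B(z,q,p,b)`: the union of the connected components of `b∖q` that intersect `p∖q`. -/
def Bset {V : Type*} [Preorder V] (z q p b : Set V) : Set V :=
  {x | x ∈ b \ q ∧ ∃ y ∈ p \ q, ReachIn (b \ q) x y}

section AuxComb
variable {V : Type*} [Preorder V] (z q p b : LowerSet V)

lemma Zset_closed' {x x' : V} (hx : x ∈ Zset (z : Set V) q p b)
    (hx' : x' ∈ (p : Set V) \ z) (hcomp : x' ≤ x ∨ x ≤ x') :
    x' ∈ Zset (z : Set V) q p b := by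
  obtain ⟨hxm, y, hy, hr⟩ := hx
  exact ⟨hx', y, hy, Relation.ReflTransGen.head ⟨hx', hxm, hcomp⟩ hr⟩

lemma Bset_closed' {x x' : V} (hx : x ∈ Bset (z : Set V) q p b)
    (hx' : x' ∈ (b : Set V) \ q) (hcomp : x' ≤ x ∨ x ≤ x') :
    x' ∈ Bset (z : Set V) q p b := by
  obtain ⟨hxm, y, hy, hr⟩ := hx
  exact ⟨hx', y, hy, Relation.ReflTransGen.head ⟨hx', hxm, hcomp⟩ hr⟩

lemma zt_lower' : IsLowerSet ((p : Set V) \ Zset (z : Set V) q p b) := by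
  rintro a c hca ⟨hap, haZ⟩
  refine ⟨p.lower hca hap, fun hcZ => haZ ?_⟩
  have hanz : a ∈ (p : Set V) \ z :=
    ⟨hap, fun haz => hcZ.1.2 (z.lower hca haz)⟩
  exact Zset_closed' z q p b hcZ hanz (Or.inr hca)

lemma u_lower' : IsLowerSet ((z : Set V) ∪ Zset (z : Set V) q p b) := by
  intro a c hca hc
  rcases hc with hc | hc
  · exact Or.inl (z.lower hca hc)
  · by_cases hcz : c ∈ (z : Set V)
    · exact Or.inl hcz
    · exact Or.inr (Zset_closed' z q p b hc ⟨p.lower hca hc.1.1, hcz⟩ (Or.inl hca))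

lemma bt_lower' : IsLowerSet ((q : Set V) ∪ Bset (z : Set V) q p b) := by
  intro a c hca hc
  rcases hc with hc | hc
  · exact Or.inl (q.lower hca hc)
  · by_cases hcq : c ∈ (q : Set V)
    · exact Or.inl hcq
    · exact Or.inr (Bset_closed' z q p b hc ⟨b.lower hca hc.1.1, hcq⟩ (Or.inl hca))

lemma w_lower' : IsLowerSet ((b : Set V) \ Bset (z : Set V) q p b) := by
  rintro a c hca ⟨hab, haB⟩
  refine ⟨b.lower hca hab, fun hcB => haB ?_⟩
  have hanq : a ∈ (b : Set V) \ q := ⟨hab, fun haq => hcB.1.2 (q.lower hca haq)⟩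
  exact Bset_closed' z q p b hcB hanq (Or.inr hca)

end AuxComb

section QuotHelpers
variable {C : Type*} [AddCommGroup C] {N N' D D' : AddSubgroup C}

/-- The map between quotients induced by enlarging both numerator and denominator,
given by the identity on representatives. -/
def qmap (hN : N ≤ N') (hD : D ≤ D') :
    (↥N ⧸ D.addSubgroupOf N) →+ ↥N' ⧸ D'.addSubgroupOf N' :=
  QuotientAddGroup.map _ _ (AddSubgroup.inclusion hN)
    (fun x hx => by
      rw [AddSubgroup.mem_comap, AddSubgroup.mem_addSubgroupOf] at *
      exact hD hx)

lemma qmap_mk (hN : N ≤ N') (hD : D ≤ D') (x : N) :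
    qmap hN hD (QuotientAddGroup.mk x) = QuotientAddGroup.mk (AddSubgroup.inclusion hN x) := rfl

lemma qmap_inj (hN : N ≤ N') (hD : D ≤ D') (h : ∀ x ∈ N, x ∈ D' → x ∈ D) :
    Injective (qmap hN hD) := by
  rw [injective_iff_map_eq_zero]
  intro a ha
  induction a using QuotientAddGroup.induction_on with
  | H x =>
    rw [qmap_mk] at ha
    rw [QuotientAddGroup.eq_zero_iff] at ha ⊢
    rw [AddSubgroup.mem_addSubgroupOf] at ha ⊢
    exact h x x.2 ha

lemma qmap_surj (hN : N ≤ N') (hD : D ≤ D')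
    (h : ∀ x ∈ N', ∃ a, a ∈ N ∧ x - a ∈ D') :
    Surjective (qmap hN hD) := by
  intro y
  induction y using QuotientAddGroup.induction_on with
  | H x =>
    obtain ⟨a, haN, hxa⟩ := h x x.2
    refine ⟨QuotientAddGroup.mk ⟨a, haN⟩, ?_⟩
    rw [qmap_mk]
    apply QuotientAddGroup.eq.mpr
    rw [AddSubgroup.mem_addSubgroupOf]
    have : ((-(AddSubgroup.inclusion hN ⟨a, haN⟩) + x : N') : C) = x - a := by
      simp [AddSubgroup.coe_inclusion, sub_eq_neg_add]
    rw [this]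
    exact hxa

end QuotHelpers

/-- Reducing S-terms: for a distributive `D(ℤ̄ⁿ)`-filtration and downsets
`z ⊆ q ⊆ p ⊆ b`, with `Z := Z(z,q,p,b)`, `B := B(z,q,p,b)`, `z̃ := p∖Z`, `b̃ := q∪B`,
the sets `z̃`, `b̃` are downsets with `z ⊆ z̃ ⊆ q`, `p ⊆ b̃ ⊆ b`, and the four maps given by
the identity on representatives form a commutative square of isomorphisms
`S^{p,z}_{b̃,q} ≅ S^{p,z̃}_{b̃,q} ≅ S^{p,z̃}_{b,q} ≅ S^{p,z}_{b,q}`. -/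

theorem statement5 {n : ℕ} {C : Type*} [AddCommGroup C] (d : C →+ C)
    (hd : ∀ x : C, d (d x) = 0)
    (F : LowerSet (Fin n → ZBar) → AddSubgroup C)
    (hmono : Monotone F)
    (hsub : ∀ a, ∀ x ∈ F a, d x ∈ F a)
    (hinf : ∀ a b, F (a ⊓ b) = F a ⊓ F b)
    (hsup : ∀ a b, F (a ⊔ b) = F a ⊔ F b)
    (z q p b : LowerSet (Fin n → ZBar))
    (hzq : z ≤ q) (hqp : q ≤ p) (hpb : p ≤ b) :
    ∃ (zt bt : LowerSet (Fin n → ZBar)),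
      (zt : Set (Fin n → ZBar)) =
        (p : Set (Fin n → ZBar)) \ Zset (z : Set (Fin n → ZBar)) ↑q ↑p ↑b ∧
      (bt : Set (Fin n → ZBar)) =
        (q : Set (Fin n → ZBar)) ∪ Bset (z : Set (Fin n → ZBar)) ↑q ↑p ↑b ∧
      z ≤ zt ∧ zt ≤ q ∧ p ≤ bt ∧ bt ≤ b ∧
      ∃ (ftop : Sterm d (F p) (F z) (F bt) (F q) →+ Sterm d (F p) (F zt) (F bt) (F q))
        (fbot : Sterm d (F p) (F z) (F b) (F q) →+ Sterm d (F p) (F zt) (F b) (F q))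
        (fleft : Sterm d (F p) (F z) (F bt) (F q) →+ Sterm d (F p) (F z) (F b) (F q))
        (fright : Sterm d (F p) (F zt) (F bt) (F q) →+ Sterm d (F p) (F zt) (F b) (F q)),
        (∀ (x : C) (hx : x ∈ Snum d (F p) (F z)) (hx' : x ∈ Snum d (F p) (F zt)),
          ftop (Scls d (F p) (F z) (F bt) (F q) hx) = Scls d (F p) (F zt) (F bt) (F q) hx') ∧
        (∀ (x : C) (hx : x ∈ Snum d (F p) (F z)) (hx' : x ∈ Snum d (F p) (F zt)),
          fbot (Scls d (F p) (F z) (F b) (F q) hx) = Scls d (F p) (F zt) (F b) (F q) hx') ∧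
        (∀ (x : C) (hx : x ∈ Snum d (F p) (F z)),
          fleft (Scls d (F p) (F z) (F bt) (F q) hx) = Scls d (F p) (F z) (F b) (F q) hx) ∧
        (∀ (x : C) (hx : x ∈ Snum d (F p) (F zt)),
          fright (Scls d (F p) (F zt) (F bt) (F q) hx) = Scls d (F p) (F zt) (F b) (F q) hx) ∧
        Bijective ftop ∧ Bijective fbot ∧ Bijective fleft ∧ Bijective fright ∧
        fright.comp ftop = fbot.comp fleft := by
  set V := Fin n → ZBar
  set Z := Zset (z : Set V) q p b with hZdef
  set Bs := Bset (z : Set V) q p b with hBdef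
  let zt : LowerSet V := ⟨(p : Set V) \ Z, zt_lower' z q p b⟩
  let u : LowerSet V := ⟨(z : Set V) ∪ Z, u_lower' z q p b⟩
  let bt : LowerSet V := ⟨(q : Set V) ∪ Bs, bt_lower' z q p b⟩
  let w : LowerSet V := ⟨(b : Set V) \ Bs, w_lower' z q p b⟩
  have hZsub : Z ⊆ (p : Set V) \ z := fun x hx => hx.1
  have hBsub : Bs ⊆ (b : Set V) \ q := fun x hx => hx.1
  have hz_zt : z ≤ zt := fun x hx => ⟨hqp (hzq hx), fun hZx => (hZsub hZx).2 hx⟩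
  have hzt_q : zt ≤ q := by
    rintro x ⟨hxp, hxZ⟩
    by_contra hxq
    exact hxZ ⟨⟨hxp, fun hxz => hxq (hzq hxz)⟩, x, ⟨hxp, hxq⟩, Relation.ReflTransGen.refl⟩
  have hp_bt : p ≤ bt := by
    intro x hx
    by_cases hxq : x ∈ (q : Set V)
    · exact Or.inl hxq
    · exact Or.inr ⟨⟨hpb hx, hxq⟩, x, ⟨hx, hxq⟩, Relation.ReflTransGen.refl⟩
  have hbt_b : bt ≤ b := by
    rintro x (hx | hx)
    · exact hpb (hqp hx)
    · exact (hBsub hx).1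
  have hu_p : u ≤ p := by
    rintro x (hx | hx)
    · exact hqp (hzq hx)
    · exact (hZsub hx).1
  have h1 : zt ⊓ u = z := by
    apply LowerSet.ext
    ext x
    constructor
    · rintro ⟨⟨hxp, hxZ⟩, (hxz | hxZ')⟩
      · exact hxz
      · exact absurd hxZ' hxZ
    · intro hxz
      exact ⟨hz_zt hxz, Or.inl hxz⟩
  have h2 : zt ⊔ u = p := by
    apply LowerSet.ext
    ext x
    constructor
    · rintro (hx | hx)
      · exact hx.1
      · exact hu_p hx
    · intro hxp
      by_cases hxZ : x ∈ Z
      · exact Or.inr (Or.inr hxZ)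
      · exact Or.inl ⟨hxp, hxZ⟩
  have h3 : bt ⊓ w = q := by
    apply LowerSet.ext
    ext x
    constructor
    · rintro ⟨(hxq | hxB), hxw⟩
      · exact hxq
      · exact absurd hxB hxw.2
    · intro hxq
      exact ⟨Or.inl hxq, ⟨hpb (hqp hxq), fun hxB => (hBsub hxB).2 hxq⟩⟩
  have h4 : bt ⊔ w = b := by
    apply LowerSet.ext
    ext x
    constructor
    · rintro (hx | hx)
      · exact hbt_b hx
      · exact hx.1
    · intro hxb
      by_cases hxB : x ∈ Bs
      · exact Or.inl (Or.inr hxB)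
      · exact Or.inr ⟨hxb, hxB⟩
  have hFz : F zt ⊓ F u = F z := by rw [← hinf, h1]
  have hFp : F zt ⊔ F u = F p := by rw [← hsup, h2]
  have hFq : F bt ⊓ F w = F q := by rw [← hinf, h3]
  have hFb : F bt ⊔ F w = F b := by rw [← hsup, h4]
  have keyA : ∀ x ∈ Snum d (F p) (F zt), ∃ a, a ∈ Snum d (F p) (F z) ∧ x - a ∈ F q := by
    intro x hx
    have hxp : x ∈ F zt ⊔ F u := hFp ▸ hx.1
    rw [AddSubgroup.mem_sup] at hxp
    obtain ⟨x1, hx1, x2, hx2, hx12⟩ := hxp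
    have hdx : d x ∈ F zt := hx.2
    have hdx2 : d x2 ∈ F z := by
      have h5 : d x2 = d x - d x1 := by rw [← hx12, map_add]; abel
      have h6 : d x2 ∈ F zt := h5 ▸ sub_mem hdx (hsub zt x1 hx1)
      have h7 : d x2 ∈ F zt ⊓ F u := ⟨h6, hsub u x2 hx2⟩
      rwa [hFz] at h7
    refine ⟨x2, ⟨hmono hu_p hx2, hdx2⟩, ?_⟩
    have hxx2 : x - x2 = x1 := by rw [← hx12]; abel
    rw [hxx2]
    exact hmono hzt_q hx1
  have keyB : ∀ x ∈ F p, x ∈ Sden d (F b) (F q) → x ∈ Sden d (F bt) (F q) := by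
    intro x hxp hx
    rw [AddSubgroup.mem_sup] at hx
    obtain ⟨dy, hdy, w0, hw0, hsum⟩ := hx
    rw [AddSubgroup.mem_map] at hdy
    obtain ⟨y, hy, rfl⟩ := hdy
    have hyb : y ∈ F bt ⊔ F w := hFb ▸ hy
    rw [AddSubgroup.mem_sup] at hyb
    obtain ⟨y1, hy1, y2, hy2, hy12⟩ := hyb
    have hdy2q : d y2 ∈ F q := by
      have h5 : d y2 = x - d y1 - w0 := by rw [← hsum, ← hy12, map_add]; abel
      have h6 : d y2 ∈ F bt :=
        h5 ▸ sub_mem (sub_mem (hmono hp_bt hxp) (hsub bt y1 hy1)) (hmono (le_trans hqp hp_bt) hw0)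
      have h7 : d y2 ∈ F bt ⊓ F w := ⟨h6, hsub w y2 hy2⟩
      rwa [hFq] at h7
    rw [AddSubgroup.mem_sup]
    refine ⟨d y1, AddSubgroup.mem_map_of_mem d hy1, w0 + d y2, add_mem hw0 hdy2q, ?_⟩
    rw [← hsum, ← hy12, map_add]
    abel
  have hNle : Snum d (F p) (F z) ≤ Snum d (F p) (F zt) :=
    inf_le_inf le_rfl (AddSubgroup.comap_mono (hmono hz_zt))
  have hDle : Sden d (F bt) (F q) ≤ Sden d (F b) (F q) :=
    sup_le_sup (AddSubgroup.map_mono (hmono hbt_b)) le_rfl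
  refine ⟨zt, bt, rfl, rfl, hz_zt, hzt_q, hp_bt, hbt_b,
    qmap hNle le_rfl, qmap hNle le_rfl, qmap le_rfl hDle, qmap le_rfl hDle,
    fun x hx hx' => rfl, fun x hx hx' => rfl, fun x hx => rfl, fun x hx => rfl,
    ?_, ?_, ?_, ?_, ?_⟩
  · exact ⟨qmap_inj _ _ (fun x _ h => h),
      qmap_surj _ _ (fun x hx => by
        obtain ⟨a, ha, hq'⟩ := keyA x hx
        exact ⟨a, ha, AddSubgroup.mem_sup_right hq'⟩)⟩
  · exact ⟨qmap_inj _ _ (fun x _ h => h),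
      qmap_surj _ _ (fun x hx => by
        obtain ⟨a, ha, hq'⟩ := keyA x hx
        exact ⟨a, ha, AddSubgroup.mem_sup_right hq'⟩)⟩
  · exact ⟨qmap_inj _ _ (fun x hxN hD' => keyB x hxN.1 hD'),
      qmap_surj _ _ (fun x hx => ⟨x, hx, by rw [sub_self]; exact zero_mem _⟩)⟩
  · exact ⟨qmap_inj _ _ (fun x hxN hD' => keyB x hxN.1 hD'),
      qmap_surj _ _ (fun x hx => ⟨x, hx, by rw [sub_self]; exact zero_mem _⟩)⟩
  · refine AddMonoidHom.ext fun a => ?_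
    induction a using QuotientAddGroup.induction_on with
    | H x => rfl
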